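/- Let m ≥ 1 and w_1,…,w_n be positive integers summing to m, with f_i defined as above and σ_i the first ⌈log₂(m/w_i)⌉ + 1 bits of f_i's binary expansion. Then the σ_i are lexicographically strictly increasing in i. -/

import Mathlib

open Finset

/-- The first `L` bits of the binary expansion of a real `f ∈ [0,1)`. -/
noncomputable def binaryBits (f : ℝ) (L : ℕ) : List Bool :=
  (List.range L).map (fun k => decide (⌊f * 2 ^ (k + 1)⌋₊ % 2 = 1))

private lemma lex_append {l₁ l₂ s₁ s₂ : List Bool} (h : List.Lex (· < ·) l₁ l₂)
    (hlen : l₁.length = l₂.length) : List.Lex (· < ·) (l₁ ++ s₁) (l₂ ++ s₂) := by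
  induction h with
  | nil => simp at hlen
  | @cons a l₃ l₄ h ih => exact List.Lex.cons (ih (by simpa using hlen))
  | rel h => exact List.Lex.rel h

/-- MSB-first binary digits of `x`, `L` of them. -/
private def msbDigits (L x : ℕ) : List Bool := (List.range L).map (fun k => x.testBit (L - 1 - k))

private lemma msbDigits_mod (L x : ℕ) : msbDigits L (x % 2 ^ L) = msbDigits L x := by
  unfold msbDigits
  refine List.map_congr_left ?_
  intro k hk
  simp only [List.mem_range] at hk
  rw [Nat.testBit_mod_two_pow]
  simp [show L - 1 - k < L by omega]

private lemma msbDigits_succ (L x : ℕ) :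
    msbDigits (L + 1) x = x.testBit L :: msbDigits L x := by
  unfold msbDigits
  rw [List.range_succ_eq_map, List.map_cons, List.map_map]
  refine congrArg₂ _ ?_ (List.map_congr_left fun k hk => ?_)
  · show x.testBit (L + 1 - 1 - 0) = x.testBit L
    congr 1 <;> omega
  · simp only [List.mem_range] at hk
    show x.testBit (L + 1 - 1 - (k + 1)) = x.testBit (L - 1 - k)
    congr 1 <;> omega

private lemma msbDigits_lex {L a b : ℕ} (hab : a < b) (hb : b < 2 ^ L) :
    List.Lex (· < ·) (msbDigits L a) (msbDigits L b) := by
  induction L generalizing a b with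
  | zero => norm_num at hb; omega
  | succ L ih =>
    rw [msbDigits_succ, msbDigits_succ]
    have htb : ∀ x, x < 2 ^ (L + 1) → x.testBit L = decide (2 ^ L ≤ x) := by
      intro x hx
      rw [Nat.testBit_eq_decide_div_mod_eq]
      rcases le_or_gt (2 ^ L) x with h | h
      · have hd : x / 2 ^ L = 1 :=
          Nat.div_eq_of_lt_le (by simpa using h) (by rw [pow_succ] at hx; omega)
        simp [hd, h]
      · simp [Nat.div_eq_of_lt h, Nat.not_le.mpr h]
    have ha2 : a < 2 ^ (L + 1) := lt_trans hab hb
    have hb2 : b < 2 ^ L * 2 := by rw [← pow_succ]; exact hb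
    have ha2' : a < 2 ^ L * 2 := by rw [← pow_succ]; exact ha2
    rcases le_or_gt (2 ^ L) a with hA | hA
    · have hB : 2 ^ L ≤ b := le_trans hA hab.le
      rw [htb a ha2, htb b hb]
      simp only [decide_eq_true hA, decide_eq_true hB]
      apply List.Lex.cons
      rw [← msbDigits_mod L a, ← msbDigits_mod L b]
      have hma : a % 2 ^ L = a - 2 ^ L := by
        rw [Nat.mod_eq_sub_mod hA, Nat.mod_eq_of_lt (by omega)]
      have hmb : b % 2 ^ L = b - 2 ^ L := by
        rw [Nat.mod_eq_sub_mod hB, Nat.mod_eq_of_lt (by omega)]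
      rw [hma, hmb]
      exact ih (by omega) (by omega)
    · rcases le_or_gt (2 ^ L) b with hB | hB
      · rw [htb a ha2, htb b hb]
        simp only [decide_eq_false (not_le.mpr hA), decide_eq_true hB]
        exact List.Lex.rel (by decide)
      · rw [htb a ha2, htb b hb]
        simp only [decide_eq_false (not_le.mpr hA), decide_eq_false (not_le.mpr hB)]
        exact List.Lex.cons (ih hab hB)

private lemma binaryBits_eq_msbDigits (f : ℝ) (hf : 0 ≤ f) (L : ℕ) :
    binaryBits f L = msbDigits L ⌊f * 2 ^ L⌋₊ := by
  unfold binaryBits msbDigits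
  refine List.map_congr_left ?_
  intro k hk
  simp only [List.mem_range] at hk
  rw [Nat.testBit_eq_decide_div_mod_eq]
  congr 2
  have h1 : ⌊f * 2 ^ L⌋₊ / 2 ^ (L - 1 - k) = ⌊f * 2 ^ L / (2 ^ (L - 1 - k) : ℕ)⌋₊ :=
    (Nat.floor_div_natCast _ _).symm
  have harg : f * 2 ^ (k + 1) = f * 2 ^ L / ((2:ℝ) ^ (L - 1 - k)) := by
    rw [eq_div_iff (by positivity), mul_assoc, ← pow_add]
    congr 2
    omega
  rw [h1]
  push_cast
  rw [harg]

private lemma binaryBits_take (f : ℝ) {L L' : ℕ} (h : L ≤ L') :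
    (binaryBits f L').take L = binaryBits f L := by
  unfold binaryBits
  rw [← List.map_take, List.take_range, min_eq_left h]

private lemma binaryBits_length (f : ℝ) (L : ℕ) : (binaryBits f L).length = L := by
  simp [binaryBits]

private lemma inv_pow_le (m wi : ℕ) (hm : 1 ≤ m) (hwi : 0 < wi) :
    (1 : ℝ) / 2 ^ ((⌈Real.logb 2 ((m : ℝ) / (wi : ℝ))⌉).toNat + 1) ≤ (wi : ℝ) / (2 * m) := by
  have hm0 : (0 : ℝ) < m := by exact_mod_cast hm
  have hwi0 : (0 : ℝ) < wi := by exact_mod_cast hwi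
  have hr : (0 : ℝ) < (m : ℝ) / wi := by positivity
  set k := (⌈Real.logb 2 ((m : ℝ) / (wi : ℝ))⌉).toNat with hk
  have h1 : (m : ℝ) / wi ≤ 2 ^ k := by
    have heq : (2 : ℝ) ^ Real.logb 2 ((m : ℝ) / wi) = (m : ℝ) / wi :=
      Real.rpow_logb (by norm_num) (by norm_num) hr
    calc (m : ℝ) / wi = 2 ^ Real.logb 2 ((m : ℝ) / wi) := heq.symm
      _ ≤ 2 ^ ((k : ℕ) : ℝ) := by
          apply Real.rpow_le_rpow_of_exponent_le one_le_two
          calc Real.logb 2 ((m : ℝ) / wi) ≤ (⌈Real.logb 2 ((m : ℝ) / wi)⌉ : ℝ) := Int.le_ceil _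
            _ ≤ ((k : ℕ) : ℝ) := by
                rw [hk]
                exact_mod_cast Int.self_le_toNat _
      _ = 2 ^ k := by rw [Real.rpow_natCast]
  have h2 : (m : ℝ) ≤ wi * 2 ^ k := by
    rw [div_le_iff₀ hwi0] at h1
    linarith
  rw [div_le_div_iff₀ (by positivity) (by positivity)]
  rw [pow_succ]
  nlinarith [pow_pos (show (0:ℝ) < 2 by norm_num) k]

theorem truncated_expansions_lex_increasing (n m : ℕ) (hm : 1 ≤ m) (w : Fin n → ℕ)
    (hw : ∀ i, 0 < w i) (hsum : ∑ i, w i = m)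
    (f : Fin n → ℝ)
    (hf : ∀ i, f i = (∑ j ∈ Finset.Iio i, (w j : ℝ)) / m + (w i : ℝ) / (2 * m))
    (σ : Fin n → List Bool)
    (hσ : ∀ i, σ i = binaryBits (f i) ((⌈Real.logb 2 ((m : ℝ) / (w i : ℝ))⌉).toNat + 1)) :
    ∀ i i' : Fin n, i < i' → List.Lex (· < ·) (σ i) (σ i') := by
  intro i i' hii
  have hm0 : (0 : ℝ) < m := by exact_mod_cast hm
  set Li := (⌈Real.logb 2 ((m : ℝ) / (w i : ℝ))⌉).toNat + 1 with hLi
  set Li' := (⌈Real.logb 2 ((m : ℝ) / (w i' : ℝ))⌉).toNat + 1 with hLi'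
  set L := min Li Li' with hL
  have hsub : ∀ j : Fin n, ∑ x ∈ Finset.Iio j, w x + w j ≤ m := by
    intro j
    calc ∑ x ∈ Finset.Iio j, w x + w j = ∑ x ∈ insert j (Finset.Iio j), w x := by
          rw [Finset.sum_insert (by simp), Nat.add_comm]
      _ ≤ ∑ x, w x := Finset.sum_le_sum_of_subset (Finset.subset_univ _)
      _ = m := hsum
  have hstep : ∑ x ∈ Finset.Iio i, w x + w i ≤ ∑ x ∈ Finset.Iio i', w x := by
    calc ∑ x ∈ Finset.Iio i, w x + w i = ∑ x ∈ insert i (Finset.Iio i), w x := by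
          rw [Finset.sum_insert (by simp), Nat.add_comm]
      _ ≤ ∑ x ∈ Finset.Iio i', w x := by
          apply Finset.sum_le_sum_of_subset
          intro x hx
          simp only [Finset.mem_insert, Finset.mem_Iio] at hx ⊢
          rcases hx with rfl | hx
          · exact hii
          · exact lt_trans hx hii
  have hf_nonneg : ∀ j : Fin n, 0 ≤ f j := by
    intro j
    rw [hf j]
    have : (0:ℝ) ≤ ∑ x ∈ Finset.Iio j, (w x : ℝ) :=
      Finset.sum_nonneg fun x _ => by positivity
    positivity
  have hfi'_lt : f i' < 1 := by
    rw [hf i']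
    have h1 : (∑ x ∈ Finset.Iio i', (w x : ℝ)) + w i' ≤ m := by exact_mod_cast hsub i'
    have hwpos : (0:ℝ) < w i' := by exact_mod_cast hw i'
    rw [div_add_div _ _ (ne_of_gt hm0) (by positivity : (2*(m:ℝ)) ≠ 0),
      div_lt_one (by positivity)]
    nlinarith
  have hdiff : f i + ((w i : ℝ) + w i') / (2 * m) ≤ f i' := by
    rw [hf i, hf i']
    have h1 : (∑ x ∈ Finset.Iio i, (w x : ℝ)) + w i ≤ ∑ x ∈ Finset.Iio i', (w x : ℝ) := by
      exact_mod_cast hstep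
    have e : (∑ j ∈ Finset.Iio i, (w j:ℝ))/m + (w i:ℝ)/(2*m) + ((w i:ℝ)+(w i':ℝ))/(2*m)
        = ((∑ j ∈ Finset.Iio i, (w j:ℝ)) + w i)/m + (w i':ℝ)/(2*m) := by
      field_simp
      ring
    rw [e]
    have h2 : ((∑ j ∈ Finset.Iio i, (w j:ℝ)) + w i)/m ≤ (∑ j ∈ Finset.Iio i', (w j:ℝ))/m := by
      gcongr
    linarith
  have hgap : (1 : ℝ) / 2 ^ L ≤ ((w i : ℝ) + w i') / (2 * m) := by
    have hbi := inv_pow_le m (w i) hm (hw i)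
    have hbi' := inv_pow_le m (w i') hm (hw i')
    have hwpos : (0:ℝ) < w i := by exact_mod_cast hw i
    have hwpos' : (0:ℝ) < w i' := by exact_mod_cast hw i'
    have hadd : ((w i : ℝ) + w i') / (2 * m) = (w i : ℝ)/(2*m) + (w i' : ℝ)/(2*m) := by ring
    rcases min_cases Li Li' with ⟨hmin, _⟩ | ⟨hmin, _⟩
    · rw [hL, hmin, hadd]
      have : (0:ℝ) < (w i' : ℝ) / (2*m) := by positivity
      linarith [hbi]
    · rw [hL, hmin, hadd]
      have : (0:ℝ) < (w i : ℝ) / (2*m) := by positivity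
      linarith [hbi']
  have hpowpos : (0:ℝ) < 2 ^ L := by positivity
  have hNN : ⌊f i * 2 ^ L⌋₊ < ⌊f i' * 2 ^ L⌋₊ := by
    have h1 : (⌊f i * 2 ^ L⌋₊ : ℝ) ≤ f i * 2 ^ L :=
      Nat.floor_le (mul_nonneg (hf_nonneg i) hpowpos.le)
    have h2 : ((⌊f i * 2 ^ L⌋₊ + 1 : ℕ) : ℝ) ≤ f i' * 2 ^ L := by
      push_cast
      have h3 := mul_le_mul_of_nonneg_right hdiff hpowpos.le
      have hg := mul_le_mul_of_nonneg_right hgap hpowpos.le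
      rw [one_div, inv_mul_cancel₀ (ne_of_gt hpowpos)] at hg
      nlinarith
    have := Nat.le_floor h2
    omega
  have hN' : ⌊f i' * 2 ^ L⌋₊ < 2 ^ L := by
    rw [Nat.floor_lt (mul_nonneg (hf_nonneg i') hpowpos.le)]
    push_cast
    nlinarith
  have hlex : List.Lex (· < ·) (binaryBits (f i) L) (binaryBits (f i') L) := by
    rw [binaryBits_eq_msbDigits _ (hf_nonneg i), binaryBits_eq_msbDigits _ (hf_nonneg i')]
    exact msbDigits_lex hNN hN'
  have hdecomp : ∀ (g : ℝ) (Lg : ℕ), L ≤ Lg →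
      binaryBits g Lg = binaryBits g L ++ (binaryBits g Lg).drop L := by
    intro g Lg hLg
    conv_lhs => rw [← List.take_append_drop L (binaryBits g Lg)]
    rw [binaryBits_take g hLg]
  rw [hσ i, hσ i', ← hLi, ← hLi',
    hdecomp (f i) Li (min_le_left _ _), hdecomp (f i') Li' (min_le_right _ _)]
  exact lex_append hlex (by rw [binaryBits_length, binaryBits_length])
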